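/- For every unlabelled nonplanar binary tree T with k leaves, the coefficient of T in N^{k−1}(•) equals k!/s_T, where s_T is the number of automorphisms of T. Equivalently, the coefficient of T in the pre-Lie exponential W(•) = Σ_{k≥1} N^{k−1}(•)/k! is 1/s_T. -/

import Mathlib

/-- Full binary rooted trees. -/
inductive BTree : Type
  | leaf : BTree
  | node : BTree → BTree → BTree
  deriving DecidableEq

namespace BTree

def leafCount : BTree → ℕ
  | leaf => 1
  | node l r => leafCount l + leafCount r

/-- Decidable isomorphism of rooted nonplanar binary trees. -/
def isob : BTree → BTree → Bool
  | leaf, leaf => true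
  | node a b, node c d => (isob a c && isob b d) || (isob a d && isob b c)
  | _, _ => false

/-- Isomorphisms as data; `s_T = Nat.card (TIso T T)` = number of
root-preserving automorphisms of `T`. -/
inductive TIso : BTree → BTree → Type
  | leaf : TIso leaf leaf
  | node {a b c d : BTree} : TIso a c → TIso b d → TIso (node a b) (node c d)
  | swap {a b c d : BTree} : TIso a d → TIso b c → TIso (node a b) (node c d)

/-- Insertions of `S` at each edge of `T`. -/
def ins : BTree → BTree → List BTree
  | leaf, _ => []
  | node l r, S =>
      node (node l S) r :: node l (node r S) ::
        ((ins l S).map fun l' => node l' r) ++ ((ins r S).map fun r' => node l r')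

end BTree

namespace BTree

@[simp] lemma isob_leaf_leaf : isob leaf leaf = true := rfl
@[simp] lemma isob_leaf_node (a b) : isob leaf (node a b) = false := rfl
@[simp] lemma isob_node_leaf (a b) : isob (node a b) leaf = false := rfl
lemma isob_node_node (a b c d) :
    isob (node a b) (node c d) = ((isob a c && isob b d) || (isob a d && isob b c)) := rfl

lemma leafCount_pos (t : BTree) : 1 ≤ leafCount t := by
  induction t with
  | leaf => simp [leafCount]
  | node l r ihl ihr => simp [leafCount]; omega

@[simp] lemma isob_refl (t : BTree) : isob t t = true := by
  induction t with
  | leaf => rfl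
  | node l r ihl ihr => simp [isob_node_node, ihl, ihr]

lemma isob_symm : ∀ s t : BTree, isob s t = isob t s := by
  intro s
  induction s with
  | leaf => intro t; cases t <;> rfl
  | node a b iha ihb =>
    intro t; cases t with
    | leaf => rfl
    | node c d =>
      simp only [isob_node_node, iha, ihb]
      rw [Bool.and_comm (isob c b) (isob d a)]

lemma isob_trans : ∀ s t u : BTree, isob s t = true → isob t u = true → isob s u = true := by
  intro s
  induction s with
  | leaf => intro t u h1 h2; cases t <;> cases u <;> simp_all
  | node a b iha ihb =>
    intro t u h1 h2
    cases t with
    | leaf => simp at h1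
    | node c d =>
      cases u with
      | leaf => simp at h2
      | node e f =>
        simp only [isob_node_node, Bool.or_eq_true, Bool.and_eq_true] at h1 h2 ⊢
        rcases h1 with ⟨h1, h1'⟩ | ⟨h1, h1'⟩ <;> rcases h2 with ⟨h2, h2'⟩ | ⟨h2, h2'⟩
        · exact Or.inl ⟨iha c e h1 h2, ihb d f h1' h2'⟩
        · exact Or.inr ⟨iha c f h1 h2, ihb d e h1' h2'⟩
        · exact Or.inr ⟨iha d f h1 h2', ihb c e h1' h2⟩
        · exact Or.inl ⟨iha d e h1 h2', ihb c f h1' h2⟩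

lemma isob_leafCount : ∀ s t : BTree, isob s t = true → leafCount s = leafCount t := by
  intro s
  induction s with
  | leaf => intro t h; cases t <;> simp_all
  | node a b iha ihb =>
    intro t h
    cases t with
    | leaf => simp at h
    | node c d =>
      simp only [isob_node_node, Bool.or_eq_true, Bool.and_eq_true] at h
      rcases h with ⟨h1, h2⟩ | ⟨h1, h2⟩
      · simp [leafCount, iha c h1, ihb d h2]
      · simp [leafCount, iha d h1, ihb c h2]; omega

def nIso : BTree → BTree → ℕ
  | leaf, leaf => 1
  | node a b, node c d => nIso a c * nIso b d + nIso a d * nIso b c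
  | _, _ => 0

@[simp] lemma nIso_leaf_leaf : nIso leaf leaf = 1 := rfl
lemma nIso_node_node (a b c d) :
    nIso (node a b) (node c d) = nIso a c * nIso b d + nIso a d * nIso b c := rfl

lemma nIso_pos : ∀ t : BTree, 1 ≤ nIso t t := by
  intro t
  induction t with
  | leaf => simp
  | node a b iha ihb =>
    rw [nIso_node_node]
    have := Nat.mul_le_mul iha ihb
    omega

lemma nIso_eq_zero : ∀ s t : BTree, isob s t = false → nIso s t = 0 := by
  intro s
  induction s with
  | leaf => intro t h; cases t <;> simp_all [nIso]
  | node a b iha ihb =>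
    intro t h
    cases t with
    | leaf => rfl
    | node c d =>
      simp only [isob_node_node, Bool.or_eq_false_iff, Bool.and_eq_false_iff] at h
      rw [nIso_node_node]
      rcases h with ⟨h1, h2⟩
      have z1 : nIso a c * nIso b d = 0 := by
        rcases h1 with h | h
        · rw [iha c h]; ring
        · rw [ihb d h]; ring
      have z2 : nIso a d * nIso b c = 0 := by
        rcases h2 with h | h
        · rw [iha d h]; ring
        · rw [ihb c h]; ring
      omega

lemma nIso_eq_self : ∀ s t : BTree, isob s t = true → nIso s t = nIso s s := by
  intro s
  induction s with
  | leaf => intro t h; cases t <;> simp_all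
  | node a b iha ihb =>
    intro t h
    cases t with
    | leaf => simp at h
    | node c d =>
      simp only [isob_node_node, Bool.or_eq_true, Bool.and_eq_true] at h
      rw [nIso_node_node, nIso_node_node]
      by_cases hac : isob a c = true
      · by_cases had : isob a d = true
        · -- a ≅ c, a ≅ d; then b ≅ d or b ≅ c and all are isomorphic
          have hbd : isob b d = true ∨ isob b c = true := by tauto
          have hcd : isob c d = true := isob_trans _ _ _ ((isob_symm a c) ▸ hac) had
          have hb : isob b d = true ∧ isob b c = true := by
            rcases hbd with h' | h'
            · exact ⟨h', isob_trans _ _ _ h' ((isob_symm c d) ▸ hcd)⟩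
            · exact ⟨isob_trans _ _ _ h' hcd, h'⟩
          have hab : isob a b = true := by
            have : isob b c = true := hb.2
            exact isob_trans _ _ _ hac ((isob_symm b c) ▸ this)
          rw [iha c hac, iha d had, ihb d hb.1, ihb c hb.2, iha b hab,
            show nIso b a = nIso b b from ihb a ((isob_symm a b) ▸ hab)]
        · -- a ≅ c, ¬ a ≅ d: must be first case
          have h1 : isob a c = true ∧ isob b d = true := by tauto
          have hnad : isob a d = false := by simpa using had
          have hnab : isob a b = false := by
            by_contra hab
            simp only [Bool.not_eq_false] at hab
            exact had (isob_trans _ _ _ hab h1.2)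
          rw [iha c hac, ihb d h1.2, nIso_eq_zero a d hnad, nIso_eq_zero a b hnab]
          have : nIso b a = 0 := nIso_eq_zero b a (by rw [← isob_symm]; exact hnab)
          rw [this]; ring
      · -- ¬ a ≅ c: must be second case
        have h2 : isob a d = true ∧ isob b c = true := by tauto
        have hnac : isob a c = false := by simpa using hac
        have hnab : isob a b = false := by
          by_contra hab
          simp only [Bool.not_eq_false] at hab
          exact hac (isob_trans _ _ _ hab h2.2)
        have hnbd : isob b d = false := by
          by_contra hbd
          simp only [Bool.not_eq_false] at hbd
          exact hac (isob_trans _ _ _ (isob_trans _ _ _ h2.1 ((isob_symm b d) ▸ hbd)) h2.2)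
        rw [iha d h2.1, ihb c h2.2, nIso_eq_zero a c hnac, nIso_eq_zero a b hnab]
        have : nIso b a = 0 := nIso_eq_zero b a (by rw [← isob_symm]; exact hnab)
        rw [this, nIso_eq_zero b d hnbd]
        ring





def tisoEquiv (a b c d : BTree) :
    TIso (node a b) (node c d) ≃ (TIso a c × TIso b d) ⊕ (TIso a d × TIso b c) where
  toFun x := match x with
    | .node i j => .inl (i, j)
    | .swap i j => .inr (i, j)
  invFun x := match x with
    | .inl (i, j) => .node i j
    | .inr (i, j) => .swap i j
  left_inv x := by cases x <;> rfl
  right_inv x := by rcases x with ⟨i, j⟩ | ⟨i, j⟩ <;> rfl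

def tisoLeafEquiv : TIso leaf leaf ≃ Unit where
  toFun _ := Unit.unit
  invFun _ := .leaf
  left_inv x := by cases x; rfl
  right_inv x := rfl

instance isEmpty_tiso_leaf_node (a b : BTree) : IsEmpty (TIso leaf (node a b)) :=
  ⟨fun x => nomatch x⟩

instance isEmpty_tiso_node_leaf (a b : BTree) : IsEmpty (TIso (node a b) leaf) :=
  ⟨fun x => nomatch x⟩

lemma finite_tiso : ∀ s t : BTree, Finite (TIso s t)
  | leaf, leaf => Finite.of_equiv _ tisoLeafEquiv.symm
  | leaf, node _ _ => inferInstance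
  | node _ _, leaf => inferInstance
  | node a b, node c d => by
    have h1 := finite_tiso a c
    have h2 := finite_tiso b d
    have h3 := finite_tiso a d
    have h4 := finite_tiso b c
    exact Finite.of_equiv _ (tisoEquiv a b c d).symm

lemma card_tiso : ∀ s t : BTree, Nat.card (TIso s t) = nIso s t
  | leaf, leaf => by
    rw [Nat.card_congr tisoLeafEquiv]; simp
  | leaf, node a b => by simp [nIso]
  | node a b, leaf => by simp [nIso]
  | node a b, node c d => by
    have h1 := finite_tiso a c
    have h2 := finite_tiso b d
    have h3 := finite_tiso a d
    have h4 := finite_tiso b c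
    rw [Nat.card_congr (tisoEquiv a b c d), Nat.card_sum, Nat.card_prod, Nat.card_prod,
      card_tiso a c, card_tiso b d, card_tiso a d, card_tiso b c, nIso_node_node]

def del : BTree → List BTree
  | leaf => []
  | node l r => (if r = leaf then [l] else []) ++
      ((del l).map fun l' => node l' r) ++ ((del r).map fun r' => node l r')

lemma count_map_node_right (L : List BTree) (r t : BTree) :
    ((L.map fun l' => node l' r).count t) =
      (match t with
        | node x y => if y = r then L.count x else 0
        | leaf => 0) := by
  induction L with
  | nil => cases t <;> simp
  | cons h T ih =>
    cases t with
    | leaf => simp_all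
    | node x y =>
      simp only [List.map_cons, List.count_cons, ih]
      by_cases hy : y = r
      · subst hy
        by_cases hx : x = h
        · subst hx; simp
        · simp [hx, Ne.symm hx]
      · simp [hy]
        intro h1 h2
        exact absurd h2.symm hy

lemma count_map_node_left (L : List BTree) (l t : BTree) :
    ((L.map fun r' => node l r').count t) =
      (match t with
        | node x y => if x = l then L.count y else 0
        | leaf => 0) := by
  induction L with
  | nil => cases t <;> simp
  | cons h T ih =>
    cases t with
    | leaf => simp_all
    | node x y =>
      simp only [List.map_cons, List.count_cons, ih]
      by_cases hx : x = l
      · subst hx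
        by_cases hy : y = h
        · subst hy; simp
        · simp [hy, Ne.symm hy]
      · simp [hx]
        intro h1 h2
        exact absurd h1.symm hx

lemma leaf_not_mem_ins : ∀ t s : BTree, leaf ∉ ins t s := by
  intro t
  induction t with
  | leaf => intro s; simp [ins]
  | node l r ihl ihr =>
    intro s
    simp [ins]

lemma count_ins : ∀ t t' : BTree,
    (ins t' leaf).count t + (if t = node t' leaf then 1 else 0) = (del t).count t' := by
  intro t
  induction t with
  | leaf =>
    intro t'
    have h0 : (ins t' leaf).count leaf = 0 :=
      List.count_eq_zero.mpr (leaf_not_mem_ins t' leaf)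
    simp [del, h0]
  | node l r ihl ihr =>
    intro t'
    cases t' with
    | leaf =>
      simp only [ins, List.count_nil, del, List.count_append, count_map_node_right,
        count_map_node_left, zero_add, add_zero]
      by_cases hr : r = leaf <;> by_cases hl : l = leaf <;>
          simp [hr, hl, List.count_singleton]
    | node a b =>
      have hL := ihl a
      have hR := ihr b
      simp only [ins, List.count_cons, List.count_append, del,
        count_map_node_right, count_map_node_left, List.count_nil, zero_add,
        beq_iff_eq, BTree.node.injEq]
      have E1 : (if r = b then List.count l (a.ins BTree.leaf) else 0) +
          (if (a.node BTree.leaf) = l ∧ b = r then 1 else 0) =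
          (if b = r then List.count a l.del else 0) := by
        by_cases hbr : b = r
        · subst hbr
          simp only [and_true, if_true]
          rw [← hL]
          simp [eq_comm]
        · have h1 : ¬ r = b := fun h => hbr h.symm
          simp [hbr, h1]
      have E2 : (if a = l ∧ (b.node BTree.leaf) = r then 1 else 0) +
          (if l = a then List.count r (b.ins BTree.leaf) else 0) =
          (if a = l then List.count b r.del else 0) := by
        by_cases hal : a = l
        · subst hal
          simp only [true_and, if_true]
          rw [← hR]
          have hsw : (if (b.node BTree.leaf) = r then (1:ℕ) else 0) =
              (if r = b.node BTree.leaf then 1 else 0) := by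
            by_cases h : r = b.node BTree.leaf
            · simp [h]
            · rw [if_neg h, if_neg (fun hh => h hh.symm)]
          rw [hsw]
          omega
        · have h1 : ¬ l = a := fun h => hal h.symm
          simp [hal, h1]
      have E3 : (if l = a.node b ∧ r = BTree.leaf then 1 else 0) =
          List.count (a.node b) (if r = BTree.leaf then [l] else []) := by
        by_cases hrl : r = leaf
        · subst hrl
          simp only [and_true, if_true, List.count_cons, List.count_nil, beq_iff_eq, zero_add]

        · simp [hrl]
      omega

end BTree

noncomputable section

abbrev W : Type := BTree →₀ ℚ

noncomputable def δ (t : BTree) : W := Finsupp.single t 1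

noncomputable def treeIns (t s : BTree) : W :=
  ((BTree.ins t s).map δ).sum + δ (BTree.node t s)

noncomputable def insExt (x y : W) : W :=
  x.sum fun t a => y.sum fun s b => (a * b) • treeIns t s

/-- The growth operator `N(T) = T ⊲ •`. -/
noncomputable def growth (x : W) : W := insExt x (δ BTree.leaf)

open BTree Finset

noncomputable def c : BTree → ℕ → ℚ
  | .leaf, n => if n = 0 then 1 else 0
  | .node l r, n => ∑ p ∈ Finset.range n, (n.choose p : ℚ) * c l p * c r (n - 1 - p)

lemma c_leaf (n : ℕ) : c .leaf n = if n = 0 then 1 else 0 := by rw [c]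

lemma c_node (l r : BTree) (n : ℕ) :
    c (.node l r) n = ∑ p ∈ Finset.range n, (n.choose p : ℚ) * c l p * c r (n - 1 - p) := by
  rw [c]

lemma c_zero (t : BTree) : c t 0 = if t = .leaf then 1 else 0 := by
  cases t <;> simp [c_leaf, c_node]

lemma c_ne_zero_leafCount : ∀ (t : BTree) (n : ℕ), c t n ≠ 0 → t.leafCount = n + 1 := by
  intro t
  induction t with
  | leaf => intro n h; rw [c_leaf] at h; simp [BTree.leafCount]; by_contra hn; simp at h; omega
  | node l r ihl ihr =>
    intro n h
    rw [c_node] at h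
    obtain ⟨p, hp, hne⟩ := Finset.exists_ne_zero_of_sum_ne_zero h
    have h1 : c l p ≠ 0 := fun hz => hne (by rw [hz]; ring)
    have h2 : c r (n - 1 - p) ≠ 0 := fun hz => hne (by rw [hz]; ring)
    have e1 := ihl p h1
    have e2 := ihr (n - 1 - p) h2
    rw [Finset.mem_range] at hp
    simp only [BTree.leafCount]
    omega

lemma list_sum_map_sum {α : Type} (L : List α) (s : Finset ℕ) (f : ℕ → α → ℚ) :
    (L.map fun x => ∑ p ∈ s, f p x).sum = ∑ p ∈ s, (L.map (f p)).sum := by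
  induction L with
  | nil => simp
  | cons h T ih => simp [ih, Finset.sum_add_distrib]

lemma list_map_mul {α : Type} (L : List α) (A B : ℚ) (f : α → ℚ) :
    (L.map fun x => A * f x * B).sum = A * (L.map f).sum * B := by
  induction L with
  | nil => simp
  | cons h T ih => simp [ih]; ring

lemma delsum : ∀ (t : BTree) (n : ℕ),
    ((BTree.del t).map fun t' => c t' n).sum = c t (n + 1) := by
  intro t
  induction t with
  | leaf => intro n; simp [BTree.del, c_leaf]
  | node l r ihl ihr =>
    intro n
    rw [BTree.del, List.map_append, List.map_append, List.sum_append, List.sum_append,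
      List.map_map, List.map_map]
    have P1 : ((if r = BTree.leaf then [l] else []).map fun t' => c t' n).sum
        = c l n * c r 0 := by
      by_cases hr : r = BTree.leaf
      · subst hr; simp [c_zero]
      · simp [hr, c_zero]
    have P2 : ((BTree.del l).map ((fun t' => c t' n) ∘ fun l' => BTree.node l' r)).sum
        = ∑ p ∈ Finset.range n, (n.choose p : ℚ) * c l (p + 1) * c r (n - 1 - p) := by
      have : ((fun t' => c t' n) ∘ fun l' => BTree.node l' r)
          = fun l' => ∑ p ∈ Finset.range n, (n.choose p : ℚ) * c l' p * c r (n - 1 - p) := by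
        funext l'; simp [Function.comp, c_node]
      rw [this, list_sum_map_sum]
      refine Finset.sum_congr rfl fun p hp => ?_
      rw [list_map_mul, ihl p]
    have P3 : ((BTree.del r).map ((fun t' => c t' n) ∘ fun r' => BTree.node l r')).sum
        = ∑ p ∈ Finset.range n, (n.choose p : ℚ) * c l p * c r (n - p) := by
      have : ((fun t' => c t' n) ∘ fun r' => BTree.node l r')
          = fun r' => ∑ p ∈ Finset.range n, (n.choose p : ℚ) * c l p * c r' (n - 1 - p) := by
        funext r'; simp [Function.comp, c_node]
      rw [this, list_sum_map_sum]
      refine Finset.sum_congr rfl fun p hp => ?_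
      rw [Finset.mem_range] at hp
      have hcomp : (fun r' => (n.choose p : ℚ) * c l p * c r' (n - 1 - p))
          = fun r' => ((n.choose p : ℚ) * c l p) * c r' (n - 1 - p) * 1 := by
        funext r'; ring
      rw [hcomp, list_map_mul, ihr (n - 1 - p)]
      have : n - 1 - p + 1 = n - p := by omega
      rw [this]; ring
    rw [P1, P2, P3, c_node]
    -- now the binomial assembly
    set g : ℕ → ℚ := fun p => (n.choose p : ℚ) * c l p * c r (n - p) with hg
    have A1 := Finset.sum_range_succ' g n
    have A2 := Finset.sum_range_succ g n
    have A3 := Finset.sum_range_succ'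
      (fun p => ((n + 1).choose p : ℚ) * c l p * c r (n + 1 - 1 - p)) n
    have hsplit : ∀ p ∈ Finset.range n,
        ((n + 1).choose (p + 1) : ℚ) * c l (p + 1) * c r (n + 1 - 1 - (p + 1))
        = (n.choose p : ℚ) * c l (p + 1) * c r (n - 1 - p) + g (p + 1) := by
      intro p hp
      rw [Finset.mem_range] at hp
      have e1 : n + 1 - 1 - (p + 1) = n - 1 - p := by omega
      have e2 : n - (p + 1) = n - 1 - p := by omega
      rw [e1, hg]
      simp only [e2]
      rw [Nat.choose_succ_succ]
      push_cast
      ring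
    rw [A3, Finset.sum_congr rfl hsplit, Finset.sum_add_distrib]
    have hg0 : g 0 = c l 0 * c r n := by simp [hg]
    have hgn : g n = c l n * c r 0 := by simp [hg]
    have hf0 : ((n + 1).choose 0 : ℚ) * c l 0 * c r (n + 1 - 1 - 0) = c l 0 * c r n := by
      simp
    have key : ∑ p ∈ Finset.range n, g (p + 1)
        = ∑ p ∈ Finset.range n, g p + g n - g 0 := by linarith [A1, A2]
    rw [key, hf0, hgn, hg0]
    linarith

lemma delta_apply (s t : BTree) : δ s t = if s = t then 1 else 0 := by
  rw [δ, Finsupp.single_apply]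

lemma list_map_delta_sum_apply (L : List BTree) (t : BTree) :
    ((L.map δ).sum) t = (L.count t : ℚ) := by
  induction L with
  | nil => simp
  | cons h T ih =>
    rw [List.map_cons, List.sum_cons, Finsupp.add_apply, ih, delta_apply, List.count_cons]
    by_cases hh : h = t
    · subst hh; simp [add_comm]
    · push_cast
      simp [hh]

lemma treeIns_apply (t' t : BTree) :
    (treeIns t' .leaf) t = ((BTree.del t).count t' : ℚ) := by
  rw [treeIns, Finsupp.add_apply, list_map_delta_sum_apply, delta_apply]
  have h := BTree.count_ins t t'
  have hsw : (if BTree.node t' BTree.leaf = t then (1:ℚ) else 0)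
      = (if t = BTree.node t' BTree.leaf then 1 else 0) := by
    by_cases hc : t = BTree.node t' BTree.leaf
    · simp [hc]
    · rw [if_neg (fun hh => hc hh.symm), if_neg hc]
  rw [hsw, ← h]
  push_cast
  split <;> simp

lemma finset_sum_ite_eq_finsupp (x : W) (b : BTree) (f : BTree → ℚ → ℚ) (hb : f b 0 = 0) :
    (x.sum fun t a => if t = b then f t a else 0) = f b (x b) := by
  rw [Finsupp.sum, Finset.sum_ite_eq' x.support b (fun t => f t (x t))]
  split
  · rfl
  · next hmem =>
    rw [Finsupp.notMem_support_iff.mp hmem, hb]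

lemma finsupp_sum_count (x : W) (L : List BTree) :
    (x.sum fun t' a => a * (L.count t' : ℚ)) = (L.map x).sum := by
  induction L with
  | nil => simp
  | cons h T ih =>
    simp only [List.count_cons, List.map_cons, List.sum_cons]
    have hfe : (fun (t' : BTree) (a : ℚ) => a * ((T.count t' + if h == t' then 1 else 0 : ℕ) : ℚ))
        = fun t' a => a * (T.count t' : ℚ) + (if t' = h then a else 0) := by
      funext t' a
      by_cases hc : t' = h
      · subst hc; simp; push_cast; ring
      · have hc2 : ¬ h = t' := fun hcc => hc hcc.symm
        simp [hc, hc2]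
    have hfe2 : (fun (t' : BTree) (a : ℚ) => a * ((T.count t' + if t' == h then 1 else 0 : ℕ) : ℚ))
        = fun t' a => a * (T.count t' : ℚ) + (if t' = h then a else 0) := by
      funext t' a
      by_cases hc : t' = h
      · subst hc; simp; push_cast; ring
      · simp [hc]
    first
    | rw [hfe, Finsupp.sum_add, ih, finset_sum_ite_eq_finsupp x h (fun _ a => a) rfl]; ring
    | rw [hfe2, Finsupp.sum_add, ih, finset_sum_ite_eq_finsupp x h (fun _ a => a) rfl]; ring

lemma growth_apply (x : W) (t : BTree) : growth x t = ((BTree.del t).map x).sum := by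
  rw [growth, insExt]
  have h1 : (fun (t' : BTree) (a : ℚ) => ((δ BTree.leaf).sum fun s b => (a * b) • treeIns t' s))
      = fun t' a => a • treeIns t' BTree.leaf := by
    funext t' a
    rw [δ, Finsupp.sum_single_index (by simp), mul_one]
  rw [h1, Finsupp.sum_apply]
  have h2 : (fun (t' : BTree) (a : ℚ) => (a • treeIns t' BTree.leaf) t)
      = fun t' a => a * ((BTree.del t).count t' : ℚ) := by
    funext t' a
    rw [Finsupp.smul_apply, treeIns_apply, smul_eq_mul]
  rw [h2, finsupp_sum_count]

lemma G_eq : ∀ (n : ℕ) (t : BTree), (growth^[n] (δ BTree.leaf)) t = c t n := by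
  intro n
  induction n with
  | zero =>
    intro t
    rw [Function.iterate_zero_apply, delta_apply]
    cases t <;> simp [c_leaf, c_node]
  | succ n ih =>
    intro t
    rw [Function.iterate_succ_apply', growth_apply,
      List.map_congr_left (fun a _ => ih a), delsum]

noncomputable def nodeMul (x y : W) : W :=
  x.sum fun l a => y.sum fun r b => (a * b) • δ (BTree.node l r)

lemma nodeMul_apply_leaf (x y : W) : nodeMul x y BTree.leaf = 0 := by
  rw [nodeMul, Finsupp.sum_apply]
  rw [Finsupp.sum]
  apply Finset.sum_eq_zero
  intro l _
  rw [Finsupp.sum_apply, Finsupp.sum]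
  apply Finset.sum_eq_zero
  intro r _
  rw [Finsupp.smul_apply, delta_apply, if_neg (by simp)]
  simp

lemma nodeMul_apply_node (x y : W) (l r : BTree) :
    nodeMul x y (BTree.node l r) = x l * y r := by
  rw [nodeMul, Finsupp.sum_apply]
  have hinner : (fun (l' : BTree) (a : ℚ) =>
      ((y.sum fun r' b => (a * b) • δ (BTree.node l' r')) (BTree.node l r)))
      = fun l' a => if l' = l then a * y r else 0 := by
    funext l' a
    rw [Finsupp.sum_apply]
    by_cases hl : l' = l
    · subst hl
      have : (fun (r' : BTree) (b : ℚ) => ((a * b) • δ (BTree.node l' r')) (BTree.node l' r))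
          = fun r' b => if r' = r then a * b else 0 := by
        funext r' b
        rw [Finsupp.smul_apply, delta_apply]
        by_cases hr : r' = r
        · simp [hr]
        · rw [if_neg (by simp [hr]), if_neg hr]
          simp
      rw [this, finset_sum_ite_eq_finsupp y r (fun _ b => a * b) (by ring), if_pos rfl]
    · rw [if_neg hl, Finsupp.sum]
      apply Finset.sum_eq_zero
      intro r' _
      rw [Finsupp.smul_apply, delta_apply, if_neg (by simp [hl])]
      simp
  rw [hinner, finset_sum_ite_eq_finsupp x l (fun _ a => a * y r) (by ring)]

noncomputable def phi (T : BTree) (x : W) : ℚ :=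
  x.sum fun t a => if BTree.isob t T then a else 0

lemma phi_zero (T : BTree) : phi T 0 = 0 := by
  rw [phi, Finsupp.sum_zero_index]

lemma phi_add (T : BTree) (x y : W) : phi T (x + y) = phi T x + phi T y := by
  rw [phi, phi, phi]
  exact Finsupp.sum_add_index' (fun t => by split <;> rfl) (fun t a b => by split <;> simp)

noncomputable def phiHom (T : BTree) : W →+ ℚ where
  toFun := phi T
  map_zero' := phi_zero T
  map_add' := phi_add T

lemma phi_smul (T : BTree) (cc : ℚ) (x : W) : phi T (cc • x) = cc * phi T x := by
  rw [phi, phi, Finsupp.sum_smul_index (fun t => by split <;> rfl), Finsupp.mul_sum]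
  apply Finsupp.sum_congr
  intro t _
  split <;> simp

lemma phi_single (T t : BTree) : phi T (δ t) = if BTree.isob t T then 1 else 0 := by
  rw [phi, δ, Finsupp.sum_single_index (by split <;> rfl)]

lemma phi_sum {ι : Type} (T : BTree) (s : Finset ι) (f : ι → W) :
    phi T (∑ i ∈ s, f i) = ∑ i ∈ s, phi T (f i) :=
  map_sum (phiHom T) f s

lemma phi_nodeMul_double (T : BTree) (x y : W) :
    phi T (nodeMul x y) = ∑ l ∈ x.support, ∑ r ∈ y.support,
      x l * y r * (if BTree.isob (BTree.node l r) T then 1 else 0) := by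
  rw [nodeMul, Finsupp.sum, phi_sum]
  refine Finset.sum_congr rfl fun l _ => ?_
  rw [Finsupp.sum, phi_sum]
  refine Finset.sum_congr rfl fun r _ => ?_
  rw [phi_smul, phi_single]

lemma phi_eq_sum (T : BTree) (x : W) :
    phi T x = ∑ t ∈ x.support, (if BTree.isob t T then (1:ℚ) else 0) * x t := by
  rw [phi, Finsupp.sum]
  refine Finset.sum_congr rfl fun t _ => ?_
  split <;> simp

lemma ind_not {A B : BTree} (h : BTree.isob A B = false) (l r : BTree) :
    (if BTree.isob (BTree.node l r) (BTree.node A B) then (1:ℚ) else 0)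
      = (if BTree.isob l A then (1:ℚ) else 0) * (if BTree.isob r B then (1:ℚ) else 0)
        + (if BTree.isob l B then (1:ℚ) else 0) * (if BTree.isob r A then (1:ℚ) else 0) := by
  have noAB : ∀ u : BTree, BTree.isob u A = true → BTree.isob u B = true → False := by
    intro u h1 h2
    have := BTree.isob_trans A u B ((BTree.isob_symm u A) ▸ h1) h2
    rw [h] at this
    exact Bool.noConfusion this
  by_cases h1 : BTree.isob l A = true <;> by_cases h2 : BTree.isob r B = true <;>
    by_cases h3 : BTree.isob l B = true <;> by_cases h4 : BTree.isob r A = true <;>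
    first
      | (exact (noAB l h1 h3).elim)
      | (exact (noAB r h4 h2).elim)
      | (simp [BTree.isob_node_node, h1, h2, h3, h4])

lemma ind_iso {A B : BTree} (h : BTree.isob A B = true) (l r : BTree) :
    (if BTree.isob (BTree.node l r) (BTree.node A B) then (1:ℚ) else 0)
      = (if BTree.isob l A then (1:ℚ) else 0) * (if BTree.isob r B then (1:ℚ) else 0) := by
  have hBA : BTree.isob B A = true := (BTree.isob_symm A B) ▸ h
  by_cases h1 : BTree.isob l A = true <;> by_cases h2 : BTree.isob r B = true
  · have h3 : BTree.isob l B = true := BTree.isob_trans l A B h1 h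
    have h4 : BTree.isob r A = true := BTree.isob_trans r B A h2 hBA
    simp [BTree.isob_node_node, h1, h2, h3, h4]
  · have h4 : BTree.isob r A = false := by
      by_contra hc
      simp only [Bool.not_eq_false] at hc
      exact absurd (BTree.isob_trans r A B hc h) h2
    simp [BTree.isob_node_node, h1, h2, h4]
  · have h3 : BTree.isob l B = false := by
      by_contra hc
      simp only [Bool.not_eq_false] at hc
      exact absurd (BTree.isob_trans l B A hc hBA) h1
    simp [BTree.isob_node_node, h1, h3]
  · have h3 : BTree.isob l B = false := by
      by_contra hc
      simp only [Bool.not_eq_false] at hc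
      exact absurd (BTree.isob_trans l B A hc hBA) h1
    simp [BTree.isob_node_node, h1, h2, h3]

lemma phi_nodeMul_not {A B : BTree} (h : BTree.isob A B = false) (x y : W) :
    phi (BTree.node A B) (nodeMul x y) = phi A x * phi B y + phi B x * phi A y := by
  rw [phi_nodeMul_double, phi_eq_sum, phi_eq_sum, phi_eq_sum, phi_eq_sum,
    Finset.sum_mul_sum, Finset.sum_mul_sum, ← Finset.sum_add_distrib]
  refine Finset.sum_congr rfl fun l _ => ?_
  rw [← Finset.sum_add_distrib]
  refine Finset.sum_congr rfl fun r _ => ?_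
  rw [ind_not h l r]
  ring

lemma phi_nodeMul_iso {A B : BTree} (h : BTree.isob A B = true) (x y : W) :
    phi (BTree.node A B) (nodeMul x y) = phi A x * phi B y := by
  rw [phi_nodeMul_double, phi_eq_sum, phi_eq_sum, Finset.sum_mul_sum]
  refine Finset.sum_congr rfl fun l _ => ?_
  refine Finset.sum_congr rfl fun r _ => ?_
  rw [ind_iso h l r]
  ring

lemma phi_vanish (T : BTree) (p : ℕ) (h : p + 1 ≠ T.leafCount) :
    phi T (growth^[p] (δ BTree.leaf)) = 0 := by
  rw [phi, Finsupp.sum]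
  apply Finset.sum_eq_zero
  intro t ht
  rw [Finsupp.mem_support_iff] at ht
  by_cases hi : BTree.isob t T = true
  · exfalso
    have hc : c t p ≠ 0 := by rw [← G_eq]; exact ht
    have h1 := c_ne_zero_leafCount t p hc
    have h2 := BTree.isob_leafCount t T hi
    omega
  · rw [if_neg hi]

lemma G_decomp (n : ℕ) : growth^[n] (δ BTree.leaf) =
    (if n = 0 then δ BTree.leaf else 0) +
      ∑ p ∈ Finset.range n,
        ((n.choose p : ℚ)) • nodeMul (growth^[p] (δ BTree.leaf))
          (growth^[n - 1 - p] (δ BTree.leaf)) := by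
  ext t
  rw [Finsupp.add_apply, Finsupp.finset_sum_apply, G_eq]
  cases t with
  | leaf =>
    rw [c_leaf]
    have h2 : ∑ p ∈ Finset.range n,
        (((n.choose p : ℚ)) • nodeMul (growth^[p] (δ BTree.leaf))
          (growth^[n - 1 - p] (δ BTree.leaf))) BTree.leaf = 0 := by
      apply Finset.sum_eq_zero
      intro p _
      rw [Finsupp.smul_apply, nodeMul_apply_leaf]
      simp
    rw [h2, add_zero]
    split <;> simp [δ, Finsupp.single_apply]
  | node l r =>
    rw [c_node]
    have h1 : ((if n = 0 then δ BTree.leaf else 0) : W) (BTree.node l r) = 0 := by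
      split <;> simp [δ, Finsupp.single_apply]
    rw [h1, zero_add]
    refine Finset.sum_congr rfl fun p _ => ?_
    rw [Finsupp.smul_apply, nodeMul_apply_node, G_eq, G_eq, smul_eq_mul]
    ring

lemma nat_key (a b : ℕ) (ha : 1 ≤ a) (hb : 1 ≤ b) :
    (a + b - 1).choose (a - 1) * (a.factorial * b.factorial)
      = a * (a + b - 1).factorial := by
  obtain ⟨a', rfl⟩ : ∃ a', a = a' + 1 := ⟨a - 1, by omega⟩
  obtain ⟨b', rfl⟩ : ∃ b', b = b' + 1 := ⟨b - 1, by omega⟩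
  have h1 : a' ≤ a' + b' + 1 := by omega
  have h2 := Nat.choose_mul_factorial_mul_factorial h1
  have h3 : a' + b' + 1 - a' = b' + 1 := by omega
  rw [h3] at h2
  have h4 : a' + 1 + (b' + 1) - 1 = a' + b' + 1 := by omega
  have h5 : a' + 1 - 1 = a' := by omega
  rw [h4, h5, Nat.factorial_succ a']
  calc (a' + b' + 1).choose a' * ((a' + 1) * a'.factorial * (b' + 1).factorial)
      = (a' + 1) * ((a' + b' + 1).choose a' * a'.factorial * (b' + 1).factorial) := by ring
    _ = (a' + 1) * (a' + b' + 1).factorial := by rw [h2]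

lemma fact_pred (k : ℕ) (hk : 1 ≤ k) : k.factorial = k * (k - 1).factorial := by
  obtain ⟨k', rfl⟩ : ∃ k', k = k' + 1 := ⟨k - 1, by omega⟩
  simp [Nat.factorial_succ]

lemma main_lemma : ∀ T : BTree,
    phi T (growth^[T.leafCount - 1] (δ BTree.leaf))
      = ((T.leafCount).factorial : ℚ) / (BTree.nIso T T : ℚ) := by
  intro T
  induction T with
  | leaf =>
    show phi BTree.leaf (growth^[0] (δ BTree.leaf)) = _
    rw [Function.iterate_zero_apply, phi_single]
    norm_num [BTree.leafCount, BTree.nIso, Nat.factorial]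
  | node A B ihA ihB =>
    have ha := BTree.leafCount_pos A
    have hb := BTree.leafCount_pos B
    set a := A.leafCount with hadef
    set b := B.leafCount with hbdef
    have hk : (BTree.node A B).leafCount = a + b := rfl
    rw [hk, G_decomp (a + b - 1), phi_add, phi_sum,
      show ((if a + b - 1 = 0 then δ BTree.leaf else 0) : W) = 0 from if_neg (by omega),
      phi_zero, zero_add]
    have hA0 : (BTree.nIso A A : ℚ) ≠ 0 := by
      have := BTree.nIso_pos A
      exact Nat.cast_ne_zero.mpr (by omega)
    have hB0 : (BTree.nIso B B : ℚ) ≠ 0 := by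
      have := BTree.nIso_pos B
      exact Nat.cast_ne_zero.mpr (by omega)
    have hfactQ : ((a + b).factorial : ℚ) = (a + b) * ((a + b - 1).factorial : ℚ) := by
      rw [fact_pred (a + b) (by omega)]
      push_cast
      ring
    by_cases hAB : BTree.isob A B = true
    · -- isomorphic subtrees
      have hba : a = b := BTree.isob_leafCount A B hAB
      have hsum : ∀ p ∈ Finset.range (a + b - 1),
          phi (BTree.node A B) ((((a + b - 1).choose p : ℚ)) •
            nodeMul (growth^[p] (δ BTree.leaf)) (growth^[a + b - 1 - 1 - p] (δ BTree.leaf)))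
          = ((a + b - 1).choose p : ℚ) *
              (phi A (growth^[p] (δ BTree.leaf)) *
                phi B (growth^[a + b - 1 - 1 - p] (δ BTree.leaf))) := by
        intro p _
        rw [phi_smul, phi_nodeMul_iso hAB]
      rw [Finset.sum_congr rfl hsum]
      have hS := Finset.sum_eq_single (s := Finset.range (a + b - 1))
        (f := fun p => ((a + b - 1).choose p : ℚ) *
              (phi A (growth^[p] (δ BTree.leaf)) *
                phi B (growth^[a + b - 1 - 1 - p] (δ BTree.leaf)))) (a - 1)
        (fun p _ hne => by
          rw [phi_vanish A p (by omega)]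
          ring)
        (fun hnot => absurd (Finset.mem_range.mpr (by omega)) hnot)
      rw [hS]
      rw [show a + b - 1 - 1 - (a - 1) = b - 1 from by omega, ihA, ihB]
      have hn : (BTree.nIso (BTree.node A B) (BTree.node A B) : ℚ)
          = 2 * (BTree.nIso A A : ℚ) * (BTree.nIso B B : ℚ) := by
        rw [BTree.nIso_node_node, BTree.nIso_eq_self A B hAB,
          BTree.nIso_eq_self B A ((BTree.isob_symm A B) ▸ hAB)]
        push_cast
        ring
      rw [hn, div_mul_div_comm]
      have hkeyQ : ((a + b - 1).choose (a - 1) : ℚ) * ((a.factorial : ℚ) * (b.factorial : ℚ))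
          = (a : ℚ) * ((a + b - 1).factorial : ℚ) := by
        have := nat_key a b ha hb
        exact_mod_cast congrArg (Nat.cast (R := ℚ)) this
      have hbaQ : (a : ℚ) = (b : ℚ) := by exact_mod_cast hba
      rw [mul_div_assoc']
      rw [div_eq_div_iff (mul_ne_zero hA0 hB0)
        (mul_ne_zero (mul_ne_zero two_ne_zero hA0) hB0)]
      linear_combination (2 * (BTree.nIso A A : ℚ) * (BTree.nIso B B : ℚ)) * hkeyQ +
          ((BTree.nIso A A : ℚ) * (BTree.nIso B B : ℚ)) *
            (((a + b - 1).factorial : ℚ) * hbaQ - hfactQ)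
    · have hABf : BTree.isob A B = false := by simpa using hAB
      have hsum : ∀ p ∈ Finset.range (a + b - 1),
          phi (BTree.node A B) ((((a + b - 1).choose p : ℚ)) •
            nodeMul (growth^[p] (δ BTree.leaf)) (growth^[a + b - 1 - 1 - p] (δ BTree.leaf)))
          = ((a + b - 1).choose p : ℚ) * (phi A (growth^[p] (δ BTree.leaf)) *
                phi B (growth^[a + b - 1 - 1 - p] (δ BTree.leaf)))
            + ((a + b - 1).choose p : ℚ) * (phi B (growth^[p] (δ BTree.leaf)) *
                phi A (growth^[a + b - 1 - 1 - p] (δ BTree.leaf))) := by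
        intro p _
        rw [phi_smul, phi_nodeMul_not hABf]
        ring
      rw [Finset.sum_congr rfl hsum, Finset.sum_add_distrib]
      have hS1 := Finset.sum_eq_single (s := Finset.range (a + b - 1))
        (f := fun p => ((a + b - 1).choose p : ℚ) *
              (phi A (growth^[p] (δ BTree.leaf)) *
                phi B (growth^[a + b - 1 - 1 - p] (δ BTree.leaf)))) (a - 1)
        (fun p _ hne => by
          rw [phi_vanish A p (by omega)]
          ring)
        (fun hnot => absurd (Finset.mem_range.mpr (by omega)) hnot)
      have hS2 := Finset.sum_eq_single (s := Finset.range (a + b - 1))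
        (f := fun p => ((a + b - 1).choose p : ℚ) *
              (phi B (growth^[p] (δ BTree.leaf)) *
                phi A (growth^[a + b - 1 - 1 - p] (δ BTree.leaf)))) (b - 1)
        (fun p _ hne => by
          rw [phi_vanish B p (by omega)]
          ring)
        (fun hnot => absurd (Finset.mem_range.mpr (by omega)) hnot)
      rw [hS1, hS2]
      rw [show a + b - 1 - 1 - (a - 1) = b - 1 from by omega,
        show a + b - 1 - 1 - (b - 1) = a - 1 from by omega, ihA, ihB]
      have hn : (BTree.nIso (BTree.node A B) (BTree.node A B) : ℚ)
          = (BTree.nIso A A : ℚ) * (BTree.nIso B B : ℚ) := by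
        rw [BTree.nIso_node_node, BTree.nIso_eq_zero A B hABf]
        push_cast
        ring
      rw [hn]
      have hkeyQ1 : ((a + b - 1).choose (a - 1) : ℚ) * ((a.factorial : ℚ) * (b.factorial : ℚ))
          = (a : ℚ) * ((a + b - 1).factorial : ℚ) := by
        exact_mod_cast congrArg (Nat.cast (R := ℚ)) (nat_key a b ha hb)
      have hkey2 := nat_key b a hb ha
      rw [Nat.add_comm b a] at hkey2
      have hkeyQ2 : ((a + b - 1).choose (b - 1) : ℚ) * ((b.factorial : ℚ) * (a.factorial : ℚ))
          = (b : ℚ) * ((a + b - 1).factorial : ℚ) := by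
        exact_mod_cast congrArg (Nat.cast (R := ℚ)) hkey2
      rw [div_mul_div_comm, div_mul_div_comm, mul_div_assoc', mul_div_assoc',
        show (BTree.nIso B B : ℚ) * (BTree.nIso A A : ℚ)
          = (BTree.nIso A A : ℚ) * (BTree.nIso B B : ℚ) from mul_comm _ _,
        ← add_div, div_eq_div_iff (mul_ne_zero hA0 hB0) (mul_ne_zero hA0 hB0)]
      linear_combination ((BTree.nIso A A : ℚ) * (BTree.nIso B B : ℚ)) *
          (hkeyQ1 + hkeyQ2 - hfactQ)


/-- For every unlabelled nonplanar binary tree `T` with `k` leaves, the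
coefficient of `T` in `N^{k−1}(•)` (the sum of the coefficients of all planar
representatives isomorphic to `T`) equals `k!/s_T`; equivalently, the
coefficient of `T` in the pre-Lie exponential `W(•) = Σ_{k≥1} N^{k−1}(•)/k!`
is `1/s_T`. -/
theorem growth_iterate_coeff (T : BTree) (k : ℕ) (hk : 1 ≤ k)
    (h : T.leafCount = k) :
    (growth^[k - 1] (δ BTree.leaf)).sum
        (fun t a => if BTree.isob t T then a else 0) =
      (k.factorial : ℚ) / (Nat.card (BTree.TIso T T) : ℚ) := by
  subst h
  rw [BTree.card_tiso T T]
  exact main_lemma T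

end
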